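/- arXiv:1103.3710 — 2 statements merged into one kernel-verified Lean document; each statement's English description precedes it below -/
import Mathlib

section
/- Every continuous map from ω₁ (with the order topology) into a first countable, Hausdorff, Lindelöf topological space is eventually constant. -/
/-- ω₁, the first uncountable ordinal. -/
noncomputable def omega1 : Ordinal := (Cardinal.aleph 1).ord

/-- The space of countable ordinals. -/
def Omega1 : Type 1 := {o : Ordinal // o < omega1}

noncomputable instance : LinearOrder Omega1 :=
  inferInstanceAs (LinearOrder {o : Ordinal // o < omega1})

/-- ω₁ carries the order topology. -/
noncomputable instance : TopologicalSpace Omega1 := Preorder.topology Omega1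
instance : OrderTopology Omega1 := ⟨rfl⟩

open Set Filter Topology

lemma omega1_isLimit : Order.IsSuccLimit omega1 :=
  Cardinal.isSuccLimit_ord (Cardinal.aleph0_le_aleph 1)

instance : Nonempty Omega1 := ⟨⟨0, omega1_isLimit.pos⟩⟩

lemma Omega1.lt_iff {a b : Omega1} : a < b ↔ a.1 < b.1 := Iff.rfl
lemma Omega1.le_iff {a b : Omega1} : a ≤ b ↔ a.1 ≤ b.1 := Iff.rfl

instance : NoMaxOrder Omega1 :=
  ⟨fun a => ⟨⟨Order.succ a.1, omega1_isLimit.succ_lt a.2⟩,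
    Omega1.lt_iff.2 (Order.lt_succ a.1)⟩⟩

/-- Every countable sequence in ω₁ is bounded. -/
lemma Omega1.bdd (g : ℕ → Omega1) : ∃ b : Omega1, ∀ n, g n < b := by
  have h : iSup (fun n => (g n).1) < omega1 :=
    lt_of_lt_of_eq (Ordinal.iSup_lt_omega_one (f := fun n => (g n).1) (fun n => lt_of_lt_of_eq (g n).2 (Cardinal.ord_aleph 1))) (Cardinal.ord_aleph 1).symm
  refine ⟨⟨Order.succ (iSup fun n => (g n).1), omega1_isLimit.succ_lt h⟩, fun n => ?_⟩
  have hb : BddAbove (Set.range fun n => (g n).1) :=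
    ⟨omega1, by rintro _ ⟨n, rfl⟩; exact (g n).2.le⟩
  exact Omega1.lt_iff.2 (lt_of_le_of_lt (le_ciSup hb n) (Order.lt_succ _))

instance : CountableInterFilter (atTop : Filter Omega1) := by
  constructor
  intro S hS hmem
  rcases S.eq_empty_or_nonempty with rfl | hne
  · simp only [Set.sInter_empty]; exact univ_mem
  · obtain ⟨e, rfl⟩ := hS.exists_eq_range hne
    have h : ∀ n, ∃ a : Omega1, ∀ b ≥ a, b ∈ e n := by
      intro n
      exact mem_atTop_sets.1 (hmem (e n) ⟨n, rfl⟩)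
    choose a ha using h
    obtain ⟨b, hb⟩ := Omega1.bdd a
    rw [mem_atTop_sets]
    refine ⟨b, fun c hc => ?_⟩
    rw [Set.mem_sInter]
    rintro s ⟨n, rfl⟩
    exact ha n c (le_trans (hb n).le hc)

/-- Strictly monotone ℕ-sequences in ω₁ have least upper bounds, to which they converge. -/
lemma Omega1.lub (g : ℕ → Omega1) (hg : StrictMono g) :
    ∃ δ : Omega1, IsLUB (Set.range g) δ ∧ Tendsto g atTop (𝓝 δ) := by
  have h : iSup (fun n => (g n).1) < omega1 :=
    lt_of_lt_of_eq (Ordinal.iSup_lt_omega_one (f := fun n => (g n).1) (fun n => lt_of_lt_of_eq (g n).2 (Cardinal.ord_aleph 1))) (Cardinal.ord_aleph 1).symm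
  have hb : BddAbove (Set.range fun n => (g n).1) :=
    ⟨omega1, by rintro _ ⟨n, rfl⟩; exact (g n).2.le⟩
  refine ⟨⟨iSup (fun n => (g n).1), h⟩, ⟨?_, ?_⟩, ?_⟩
  · rintro _ ⟨n, rfl⟩
    exact Omega1.le_iff.2 (le_ciSup hb n)
  · intro c hc
    exact Omega1.le_iff.2 (ciSup_le fun n => Omega1.le_iff.1 (hc ⟨n, rfl⟩))
  · refine tendsto_atTop_isLUB hg.monotone ⟨?_, ?_⟩
    · rintro _ ⟨n, rfl⟩
      exact Omega1.le_iff.2 (le_ciSup hb n)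
    · intro c hc
      exact Omega1.le_iff.2 (ciSup_le fun n => Omega1.le_iff.1 (hc ⟨n, rfl⟩))

/-- Every continuous map from ω₁ into a first countable Hausdorff Lindelöf space
is eventually constant. -/
theorem continuous_omega1_eventually_constant (X : Type*) [TopologicalSpace X]
    [FirstCountableTopology X] [T2Space X] [LindelofSpace X]
    (f : Omega1 → X) (hf : Continuous f) :
    ∃ α : Omega1, ∀ β : Omega1, α ≤ β → f β = f α := by
  classical
  -- the image filter of `atTop` has the countable intersection property, so by
  -- Lindelöfness it has a cluster point `x`.
  obtain ⟨x, -, hx⟩ := isLindelof_univ (f := Filter.map f atTop) (le_principal_iff.2 univ_mem)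
  -- an antitone basis at `x`
  obtain ⟨b, hb⟩ := (𝓝 x).exists_antitone_basis
  set U : ℕ → Set X := fun n => interior (b n) with hUdef
  have hUopen : ∀ n, IsOpen (U n) := fun n => isOpen_interior
  have hbmem : ∀ n, b n ∈ 𝓝 x := fun n => hb.toHasBasis.mem_of_mem trivial
  have hUmem : ∀ n, U n ∈ 𝓝 x := fun n => interior_mem_nhds.2 (hbmem n)
  have hUsub : ∀ n, U n ⊆ b n := fun n => interior_subset
  -- cluster point: every nbhd of x is hit by `f` beyond any countable ordinal
  have hfreq : ∀ s : Set X, s ∈ 𝓝 x → ∀ α : Omega1, ∃ β, α < β ∧ f β ∈ s := by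
    intro s hs α
    have hV : f '' Set.Ioi α ∈ Filter.map f atTop :=
      mem_map.2 (mem_of_superset (Ioi_mem_atTop α) (Set.subset_preimage_image f _))
    obtain ⟨y, hy1, β, hβ, rfl⟩ := clusterPt_iff_nonempty.1 hx hs hV
    exact ⟨β, hβ, hy1⟩
  -- `x` is attained cofinally: beyond any α there is δ with f δ = x
  have hxval : ∀ α : Omega1, ∃ δ, α < δ ∧ f δ = x := by
    intro α
    have step : ∀ (n : ℕ) (β : Omega1), ∃ γ, β < γ ∧ f γ ∈ U n :=
      fun n β => hfreq (U n) (hUmem n) β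
    choose ν h1 h2 using step
    let g : ℕ → Omega1 := fun k => Nat.rec (ν 0 α) (fun k ih => ν (k + 1) ih) k
    have hgs : StrictMono g := strictMono_nat_of_lt_succ (fun k => h1 (k + 1) (g k))
    have hgU : ∀ k, f (g k) ∈ U k := by
      intro k; cases k with
      | zero => exact h2 0 α
      | succ k => exact h2 (k + 1) (g k)
    obtain ⟨δ, hlub, htend⟩ := Omega1.lub g hgs
    have ht1 : Tendsto (f ∘ g) atTop (𝓝 (f δ)) := (hf.tendsto δ).comp htend
    have ht2 : Tendsto (f ∘ g) atTop (𝓝 x) := hb.tendsto (fun k => hUsub k (hgU k))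
    have hδ : f δ = x := tendsto_nhds_unique ht1 ht2
    exact ⟨δ, lt_of_lt_of_le (h1 0 α) (hlub.1 ⟨0, rfl⟩), hδ⟩
  -- main claim: f is eventually equal to x
  have main : ∃ α : Omega1, ∀ β, α < β → f β = x := by
    by_contra hcon
    push_neg at hcon
    -- separation: any value ≠ x avoids some basis set
    have sep : ∀ β : Omega1, f β ≠ x → ∃ n, f β ∉ b n := by
      intro β hne
      obtain ⟨n, -, hn⟩ := hb.toHasBasis.mem_iff.1 (compl_singleton_mem_nhds hne.symm)
      exact ⟨n, fun hmem => (hn hmem) rfl⟩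
    -- some n has the "bad" set {β | f β ∉ b n} unbounded
    have hbad : ∃ n, ∀ c : Omega1, ∃ β, c < β ∧ f β ∉ b n := by
      by_contra hno
      push_neg at hno
      choose c hc using hno
      obtain ⟨d, hd⟩ := Omega1.bdd c
      obtain ⟨β, hβ1, hβ2⟩ := hcon d
      obtain ⟨n, hn⟩ := sep β hβ2
      exact hn (hc n β (lt_trans (hd n) hβ1))
    obtain ⟨n, hBn⟩ := hbad
    choose νA hA1 hA2 using hxval
    choose νB hB1 hB2 using hBn
    -- interleaved sequence: a k ∈ f⁻¹{x}, q k ∉ f⁻¹(b n), a 0 < q 0 < a 1 < q 1 < ...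
    let F : Omega1 → Omega1 × Omega1 := fun t => (νA t, νB (νA t))
    let p : ℕ → Omega1 × Omega1 :=
      fun k => Nat.rec (F (Classical.arbitrary Omega1)) (fun _ ih => F ih.2) k
    have hp : ∀ k, ∃ t, p k = F t := by
      intro k; cases k with
      | zero => exact ⟨_, rfl⟩
      | succ k => exact ⟨_, rfl⟩
    set a : ℕ → Omega1 := fun k => (p k).1 with ha
    set q : ℕ → Omega1 := fun k => (p k).2 with hq
    have hfa : ∀ k, f (a k) = x := by
      intro k; obtain ⟨t, ht⟩ := hp k
      simp only [ha, ht]; exact hA2 t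
    have hfq : ∀ k, f (q k) ∉ b n := by
      intro k; obtain ⟨t, ht⟩ := hp k
      simp only [hq, ht]; exact hB2 (νA t)
    have haq : ∀ k, a k < q k := by
      intro k; obtain ⟨t, ht⟩ := hp k
      simp only [ha, hq, ht]; exact hB1 (νA t)
    have hqa : ∀ k, q k < a (k + 1) := by
      intro k
      have : a (k + 1) = νA (q k) := rfl
      rw [this]; exact hA1 (q k)
    have has : StrictMono a :=
      strictMono_nat_of_lt_succ (fun k => lt_trans (haq k) (hqa k))
    have hqs : StrictMono q :=
      strictMono_nat_of_lt_succ (fun k => lt_trans (hqa k) (haq (k + 1)))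
    obtain ⟨δ, hlubA, htendA⟩ := Omega1.lub a has
    -- q also converges to δ
    have hlubQ : IsLUB (Set.range q) δ := by
      constructor
      · rintro _ ⟨k, rfl⟩
        exact le_of_lt (lt_of_lt_of_le (hqa k) (hlubA.1 ⟨k + 1, rfl⟩))
      · intro c hc
        refine hlubA.2 ?_
        rintro _ ⟨k, rfl⟩
        exact le_of_lt (lt_of_lt_of_le (haq k) (hc ⟨k, rfl⟩))
    have htendQ : Tendsto q atTop (𝓝 δ) := tendsto_atTop_isLUB hqs.monotone hlubQ
    -- f δ = x via the a-sequence
    have ht1 : Tendsto (f ∘ a) atTop (𝓝 (f δ)) := (hf.tendsto δ).comp htendA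
    have ht2 : Tendsto (f ∘ a) atTop (𝓝 x) := by
      have : (f ∘ a) = fun _ => x := funext hfa
      rw [this]; exact tendsto_const_nhds
    have hδx : f δ = x := tendsto_nhds_unique ht1 ht2
    -- f δ ∉ U n via the q-sequence
    have ht3 : Tendsto (f ∘ q) atTop (𝓝 (f δ)) := (hf.tendsto δ).comp htendQ
    have hδU : f δ ∈ (U n)ᶜ :=
      (hUopen n).isClosed_compl.mem_of_tendsto ht3
        (Eventually.of_forall fun k hk => hfq k (hUsub n hk))
    exact hδU (hδx ▸ mem_interior_iff_mem_nhds.2 (hbmem n))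
  obtain ⟨α, hα⟩ := main
  obtain ⟨α', hα'⟩ := exists_gt α
  refine ⟨α', fun β hβ => ?_⟩
  rw [hα β (lt_of_lt_of_le hα' hβ), hα α' hα']
end

section
/- If h : [0,1] × ω₁ → M is a homotopy into a topological space M such that h(0, ·) is eventually constant, and t_n is a sequence increasing to τ in [0,1] such that each h(t_n, ·) is eventually constant, then h(τ, ·) is eventually constant. -/
/-- A map on ω₁ is eventually constant if it is constant on a tail [α, ω₁). -/
def EventuallyConstantOn {M : Type*} (g : Omega1 → M) : Prop :=
  ∃ α : Omega1, ∀ β : Omega1, α ≤ β → g β = g α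

/-- If h : [0,1] × ω₁ → M is a homotopy with h(0,·) eventually constant, and
t n is a sequence increasing to τ with each h(t n, ·) eventually constant, then
h(τ, ·) is eventually constant. -/
theorem eventuallyConstant_at_limit (M : Type*) [TopologicalSpace M] [T2Space M]
    [FirstCountableTopology M]
    (h : unitInterval × Omega1 → M) (hcont : Continuous h)
    (h0 : EventuallyConstantOn (fun β => h (0, β)))
    (t : ℕ → unitInterval) (τ : unitInterval) (hmono : Monotone t)
    (hlim : Filter.Tendsto t Filter.atTop (nhds τ))
    (hec : ∀ n, EventuallyConstantOn (fun β => h (t n, β))) :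
    EventuallyConstantOn (fun β => h (τ, β)) := by
  choose a ha using hec
  obtain ⟨α, hα⟩ : ∃ α : Omega1, ∀ n, a n ≤ α := by
    have hs : iSup (fun n => (a n).1) < omega1 := by
      apply Ordinal.iSup_lt_ord
      · rw [show omega1.cof = Cardinal.aleph 1 from Cardinal.isRegular_aleph_one.cof_eq]
        simpa using Cardinal.aleph0_lt_aleph_one
      · exact fun n => (a n).2
    exact ⟨⟨_, hs⟩, fun n => Ordinal.le_iSup _ n⟩
  refine ⟨α, fun β hβ => ?_⟩
  have h1 : Filter.Tendsto (fun n => h (t n, β)) Filter.atTop (nhds (h (τ, β))) :=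
    (hcont.tendsto _).comp (hlim.prodMk_nhds tendsto_const_nhds)
  have h2 : Filter.Tendsto (fun n => h (t n, α)) Filter.atTop (nhds (h (τ, α))) :=
    (hcont.tendsto _).comp (hlim.prodMk_nhds tendsto_const_nhds)
  have heq : (fun n => h (t n, β)) = fun n => h (t n, α) := by
    funext n
    exact (ha n β (le_trans (hα n) hβ)).trans (ha n α (hα n)).symm
  rw [heq] at h1
  exact tendsto_nhds_unique h1 h2
end
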